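/- Let A be an m × m real matrix, B an m × k real matrix, C a k × m real matrix, D a k × k real matrix, and let x : ℝ → ℝᵐ and y : ℝ → ℝᵏ be differentiable functions satisfying the coupled block-linear system x′(t) = A · x(t) + B · y(t) and y′(t) = C · x(t) + D · y(t) for all t ∈ ℝ. Then for every t ∈ ℝ, x′(t) = A · x(t) + B · (exp(t • D) · y(0)) + B · ∫₀ᵗ exp((t − s) • D) · (C · x(s)) ds, where exp denotes the matrix exponential and · denotes matrix-vector multiplication. -/

import Mathlib

open scoped Matrix

open NormedSpace

theorem mz_aux
    (m k : ℕ)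
    (C : Matrix (Fin k) (Fin m) ℝ) (D : Matrix (Fin k) (Fin k) ℝ)
    (x : ℝ → Fin m → ℝ) (y : ℝ → Fin k → ℝ)
    (hx : Differentiable ℝ x) (hy : Differentiable ℝ y)
    (hdy : ∀ t : ℝ, deriv y t = C *ᵥ x t + D *ᵥ y t) (t : ℝ) :
    y t = exp (t • D) *ᵥ y 0
      + ∫ s in (0:ℝ)..t, exp ((t - s) • D) *ᵥ (C *ᵥ x s) := by
  letI : SeminormedRing (Matrix (Fin k) (Fin k) ℝ) := Matrix.linftyOpSemiNormedRing
  letI : NormedRing (Matrix (Fin k) (Fin k) ℝ) := Matrix.linftyOpNormedRing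
  letI : NormedAlgebra ℝ (Matrix (Fin k) (Fin k) ℝ) := Matrix.linftyOpNormedAlgebra
  haveI : CompleteSpace (Matrix (Fin k) (Fin k) ℝ) :=
    inferInstanceAs (CompleteSpace (Fin k → Fin k → ℝ))
  -- Φ : matrices as continuous linear maps
  set Φ : Matrix (Fin k) (Fin k) ℝ →L[ℝ] ((Fin k → ℝ) →L[ℝ] (Fin k → ℝ)) :=
    LinearMap.toContinuousLinearMap
      (LinearMap.toContinuousLinearMap.toLinearMap.comp Matrix.toLin'.toLinearMap) with hΦ
  have hΦap : ∀ (M : Matrix (Fin k) (Fin k) ℝ) (v : Fin k → ℝ), Φ M v = M *ᵥ v := by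
    intro M v
    simp [hΦ, Matrix.toLin'_apply]
  have hEder : ∀ s : ℝ, HasDerivAt (fun s : ℝ => exp ((-s) • D))
      (-(exp ((-s) • D) * D)) s := by
    intro s
    have h1 : HasDerivAt (fun u : ℝ => exp (u • D)) (exp ((-s) • D) * D) (-s) :=
      hasDerivAt_exp_smul_const D (-s)
    have h2 : HasDerivAt (fun s : ℝ => -s) (-1) s := (hasDerivAt_neg s)
    have := h1.scomp s h2
    simp [Function.comp_def, neg_smul] at this ⊢
    exact this
  have hzder : ∀ s : ℝ, HasDerivAt (fun s : ℝ => exp ((-s) • D) *ᵥ y s)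
      (exp ((-s) • D) *ᵥ (C *ᵥ x s)) s := by
    intro s
    have hc : HasDerivAt (fun s : ℝ => Φ (exp ((-s) • D)))
        (Φ (-(exp ((-s) • D) * D))) s :=
      Φ.hasFDerivAt.comp_hasDerivAt s (hEder s)
    have h := hc.clm_apply (hy s).hasDerivAt
    rw [hdy s] at h
    have heq : Φ (-(exp ((-s) • D) * D)) (y s)
        + Φ (exp ((-s) • D)) (C *ᵥ x s + D *ᵥ y s)
        = exp ((-s) • D) *ᵥ (C *ᵥ x s) := by
      simp only [hΦap, Matrix.neg_mulVec, Matrix.mulVec_add, ← Matrix.mulVec_mulVec]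
      abel
    rw [heq] at h
    simpa only [hΦap] using h
  have hgc : Continuous fun s : ℝ => exp ((-s) • D) *ᵥ (C *ᵥ x s) := by
    have : Continuous fun s : ℝ => Φ (exp ((-s) • D)) (C *ᵥ x s) := by
      apply Continuous.clm_apply
      · exact Φ.continuous.comp ((continuous_iff_continuousAt.2 fun u => (hasDerivAt_exp_smul_const D u).continuousAt).comp continuous_neg)
      · exact (LinearMap.toContinuousLinearMap (Matrix.mulVecLin C)).continuous.comp
          hx.continuous
    simpa only [hΦap] using this
  have hgi : IntervalIntegrable (fun s : ℝ => exp ((-s) • D) *ᵥ (C *ᵥ x s))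
      MeasureTheory.volume 0 t := hgc.intervalIntegrable 0 t
  have hint : ∫ s in (0:ℝ)..t, exp ((-s) • D) *ᵥ (C *ᵥ x s)
      = exp ((-t) • D) *ᵥ y t - exp ((-(0:ℝ)) • D) *ᵥ y 0 :=
    intervalIntegral.integral_eq_sub_of_hasDerivAt (fun s _ => hzder s) hgi
  have hcomm : ∀ a b : ℝ, exp (a • D) * exp (b • D) = exp ((a + b) • D) := by
    intro a b
    rw [add_smul, Matrix.exp_add_of_commute]
    exact ((Commute.refl D).smul_left a).smul_right b
  have hcancel : ∀ v : Fin k → ℝ, exp (t • D) *ᵥ (exp ((-t) • D) *ᵥ v) = v := by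
    intro v
    rw [Matrix.mulVec_mulVec, hcomm, add_neg_cancel, zero_smul, exp_zero, Matrix.one_mulVec]
  have hyt : y t = exp (t • D) *ᵥ (exp ((-t) • D) *ᵥ y t) := (hcancel (y t)).symm
  rw [hyt]
  have : exp ((-t) • D) *ᵥ y t
      = exp ((-(0:ℝ)) • D) *ᵥ y 0 + ∫ s in (0:ℝ)..t, exp ((-s) • D) *ᵥ (C *ᵥ x s) := by
    rw [hint]; abel
  rw [this, Matrix.mulVec_add]
  congr 1
  · rw [Matrix.mulVec_mulVec, neg_zero, zero_smul, exp_zero, mul_one]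
  · -- pull exp(t•D) inside the integral
    have hpull : exp (t • D) *ᵥ (∫ s in (0:ℝ)..t, exp ((-s) • D) *ᵥ (C *ᵥ x s))
        = ∫ s in (0:ℝ)..t, exp (t • D) *ᵥ (exp ((-s) • D) *ᵥ (C *ᵥ x s)) := by
      have := (Φ (exp (t • D))).intervalIntegral_comp_comm hgi
      simpa only [hΦap] using this.symm
    rw [hpull]
    apply intervalIntegral.integral_congr
    intro s _
    show exp (t • D) *ᵥ (exp ((-s) • D) *ᵥ (C *ᵥ x s)) = _
    rw [Matrix.mulVec_mulVec, hcomm, ← sub_eq_add_neg]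

/-- Mori–Zwanzig projection of the observable dynamics in the coupled block-linear
system `x' = A·x + B·y`, `y' = C·x + D·y`: the observable evolution decomposes into
an instantaneous term, an initial-condition term, and a convolution memory term. -/
theorem mori_zwanzig_observable_dynamics
    (m k : ℕ)
    (A : Matrix (Fin m) (Fin m) ℝ) (B : Matrix (Fin m) (Fin k) ℝ)
    (C : Matrix (Fin k) (Fin m) ℝ) (D : Matrix (Fin k) (Fin k) ℝ)
    (x : ℝ → Fin m → ℝ) (y : ℝ → Fin k → ℝ)
    (hx : Differentiable ℝ x) (hy : Differentiable ℝ y)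
    (hdx : ∀ t : ℝ, deriv x t = A *ᵥ x t + B *ᵥ y t)
    (hdy : ∀ t : ℝ, deriv y t = C *ᵥ x t + D *ᵥ y t) :
    ∀ t : ℝ, deriv x t = A *ᵥ x t + B *ᵥ (NormedSpace.exp (t • D) *ᵥ y 0)
      + B *ᵥ ∫ s in (0:ℝ)..t, NormedSpace.exp ((t - s) • D) *ᵥ (C *ᵥ x s) := by
  intro t
  rw [hdx t, mz_aux m k C D x y hx hy hdy t, Matrix.mulVec_add, add_assoc]
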